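/- Let P be a ground normal logic program and U⁺ a set of atoms intersecting every positive cycle of the dependence graph of P (a positive feedback vertex set). Then the number of stable models of P is at most 2^{|U⁺|}. -/
import Mathlib


/-- A rule of a ground normal logic program. -/
structure Rule (V : Type*) where
  head : V
  pbody : Finset V
  nbody : Finset V
deriving DecidableEq

variable {V : Type*} [DecidableEq V] [Fintype V]

/-- The body formula of a rule holds in state `x`. -/
def bodySat (r : Rule V) (x : V → Bool) : Prop :=
  (∀ p ∈ r.pbody, x p = true) ∧ (∀ p ∈ r.nbody, x p = false)

instance (r : Rule V) (x : V → Bool) : Decidable (bodySat r x) := by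
  unfold bodySat; infer_instance

/-- The Boolean network encoding of a logic program. -/
def enc (P : Finset (Rule V)) (v : V) (x : V → Bool) : Bool :=
  decide (∃ r ∈ P, r.head = v ∧ bodySat r x)

/-- Positive arc of the dependence graph. -/
def posDG (P : Finset (Rule V)) (u v : V) : Prop :=
  ∃ r ∈ P, r.head = v ∧ u ∈ r.pbody

/-- Negative arc of the dependence graph. -/
def negDG (P : Finset (Rule V)) (u v : V) : Prop :=
  ∃ r ∈ P, r.head = v ∧ u ∈ r.nbody

/-- Positive arc of the influence graph of a Boolean network. -/
def posIG (f : V → (V → Bool) → Bool) (u v : V) : Prop :=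
  ∃ x : V → Bool, f v (Function.update x u false) = false ∧ f v (Function.update x u true) = true

/-- Negative arc of the influence graph of a Boolean network. -/
def negIG (f : V → (V → Bool) → Bool) (u v : V) : Prop :=
  ∃ x : V → Bool, f v (Function.update x u false) = true ∧ f v (Function.update x u true) = false

/-- `y` is a Herbrand model of the reduct of `P` with respect to `x`. -/
def modelsReduct (P : Finset (Rule V)) (x y : V → Bool) : Prop :=
  ∀ r ∈ P, (∀ p ∈ r.nbody, x p = false) → (∀ p ∈ r.pbody, y p = true) → y r.head = true

/-- `x` is a stable model of `P`: it is the least Herbrand model of the reduct `P^x`. -/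
def isStable (P : Finset (Rule V)) (x : V → Bool) : Prop :=
  modelsReduct P x x ∧ ∀ y : V → Bool, modelsReduct P x y → ∀ v, x v = true → y v = true

/-- Signed directed walks: `SWalk pos neg u v s n` means there is a directed walk of
length `n` from `u` to `v` whose parity of negative arcs is `s` (`true` = odd). -/
inductive SWalk {V : Type*} (pos neg : V → V → Prop) : V → V → Bool → ℕ → Prop where
  | nil (u : V) : SWalk pos neg u u false 0
  | consPos {u v w : V} {s : Bool} {n : ℕ} :
      pos u v → SWalk pos neg v w s n → SWalk pos neg u w s (n + 1)
  | consNeg {u v w : V} {s : Bool} {n : ℕ} :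
      neg u v → SWalk pos neg v w s n → SWalk pos neg u w (!s) (n + 1)

section Aux
variable {V : Type*} [DecidableEq V] [Fintype V]

lemma stable_fixed (P : Finset (Rule V)) (x : V → Bool) (h : isStable P x) (v : V) :
    enc P v x = x v := by
  obtain ⟨h1, h2⟩ := h
  cases hv : x v with
  | false =>
    by_contra henc
    have ht : enc P v x = true := by simpa [hv] using henc
    simp only [enc, decide_eq_true_eq] at ht
    obtain ⟨r, hr, hh, hb⟩ := ht
    have := h1 r hr hb.2 hb.1
    rw [hh, hv] at this
    exact absurd this (by simp)
  | true =>
    by_contra henc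
    have hf : enc P v x = false := by simpa [hv] using henc
    simp only [enc, decide_eq_false_iff_not] at hf
    push_neg at hf
    set y := Function.update x v false with hydef
    have hm : modelsReduct P x y := by
      intro r hr hn hp
      have hvpb : v ∉ r.pbody := by
        intro hmem
        have := hp v hmem
        simp [hydef, Function.update] at this
      have hp' : ∀ p ∈ r.pbody, x p = true := by
        intro p hpmem
        have := hp p hpmem
        rwa [hydef, Function.update_of_ne (by rintro rfl; exact hvpb hpmem)] at this
      have hhead : x r.head = true := h1 r hr hn hp'
      have hne : r.head ≠ v := by
        rintro rfl
        exact (hf r hr rfl) ⟨hp', hn⟩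
      rw [hydef, Function.update_of_ne hne]
      exact hhead
    have := h2 y hm v hv
    simp [hydef] at this

/-- Half of the step lemma: from the rule firing at `y`. -/
lemma step_half (P : Finset (Rule V)) {x y : V → Bool}
    (hx : ∀ v, enc P v x = x v) (hy : ∀ v, enc P v y = y v)
    {v : V} (hxv : x v = false) (hyv : y v = true) :
    ∃ u, x u ≠ y u ∧ ((posDG P u v ∧ y u = y v) ∨ (negDG P u v ∧ y u ≠ y v)) := by
  have hey : enc P v y = true := by rw [hy v, hyv]
  simp only [enc, decide_eq_true_eq] at hey
  obtain ⟨r, hr, hh, hby⟩ := hey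
  have hnx : ¬ bodySat r x := by
    intro hbx
    have : enc P v x = true := by
      simp only [enc, decide_eq_true_eq]; exact ⟨r, hr, hh, hbx⟩
    rw [hx v, hxv] at this; exact absurd this (by simp)
  rcases not_and_or.mp hnx with h | h
  · push_neg at h
    obtain ⟨p, hp, hxp⟩ := h
    have hxp' : x p = false := by simpa using hxp
    have hyp : y p = true := hby.1 p hp
    refine ⟨p, by simp [hxp', hyp], Or.inl ⟨⟨r, hr, hh, hp⟩, by rw [hyp, hyv]⟩⟩
  · push_neg at h
    obtain ⟨p, hp, hxp⟩ := h
    have hxp' : x p = true := by simpa using hxp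
    have hyp : y p = false := hby.2 p hp
    refine ⟨p, by simp [hxp', hyp], Or.inr ⟨⟨r, hr, hh, hp⟩, by rw [hyp, hyv]; simp⟩⟩

lemma step (P : Finset (Rule V)) {x y : V → Bool}
    (hx : ∀ v, enc P v x = x v) (hy : ∀ v, enc P v y = y v)
    (v : V) (hv : x v ≠ y v) :
    ∃ u, x u ≠ y u ∧ ((posDG P u v ∧ x u = x v) ∨ (negDG P u v ∧ x u ≠ x v)) := by
  cases hxv : x v with
  | false =>
    have hyv : y v = true := by
      cases h : y v
      · exact absurd (hxv.trans h.symm) hv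
      · rfl
    obtain ⟨u, hu, hcase⟩ := step_half P hx hy hxv hyv
    refine ⟨u, hu, ?_⟩
    have hxu : x u = !(y u) := by cases hxu' : x u <;> cases hyu' : y u <;> simp_all
    rcases hcase with ⟨hpos, heq⟩ | ⟨hneg, hne⟩
    · exact Or.inl ⟨hpos, by rw [hxu, heq, hyv]; simp⟩
    · refine Or.inr ⟨hneg, ?_⟩
      have hyu : y u = false := by
        cases hyu' : y u
        · rfl
        · exact absurd (hyu'.trans hyv.symm) hne
      rw [hxu, hyu]; simp
  | true =>
    have hyv : y v = false := by
      cases h : y v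
      · rfl
      · exact absurd (hxv.trans h.symm) hv
    obtain ⟨u, hu, hcase⟩ := step_half P hy hx hyv hxv
    exact ⟨u, fun h => hu h.symm, by rwa [hxv] at hcase⟩

end Aux

section Main
variable {V : Type*} [DecidableEq V] [Fintype V]

lemma bool_xor_aux {a b c : Bool} (h : a = !b) : (a.xor c) = !(b.xor c) := by
  cases b <;> cases c <;> simp_all

/-- Two fixed points of `enc` that agree on `U` are equal. -/
lemma fixed_agree (P : Finset (Rule V)) (U : Finset V)
    (hpfvs : ∀ (u : V) (n : ℕ), n ≠ 0 →
      ¬ SWalk (fun a b => posDG P a b ∧ a ∉ U ∧ b ∉ U)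
              (fun a b => negDG P a b ∧ a ∉ U ∧ b ∉ U) u u false n)
    {x y : V → Bool} (hx : ∀ v, enc P v x = x v) (hy : ∀ v, enc P v y = y v)
    (hU : ∀ u ∈ U, x u = y u) : x = y := by
  classical
  by_contra hxy
  obtain ⟨v0, hv0⟩ : ∃ v, x v ≠ y v := Function.ne_iff.mp hxy
  choose nxt hnxt1 hnxt2 using step P hx hy
  set D := {v : V // x v ≠ y v} with hD
  let F : D → D := fun p => ⟨nxt p.1 p.2, hnxt1 p.1 p.2⟩
  let g : ℕ → D := fun n => F^[n] ⟨v0, hv0⟩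
  have hgsucc : ∀ n, g (n + 1) = F (g n) := by
    intro n
    simp only [g, Function.iterate_succ_apply']
  have hnotU : ∀ p : D, p.1 ∉ U := by
    intro p hp
    exact p.2 (hU p.1 hp)
  -- walks
  have walk : ∀ n i, SWalk (fun a b => posDG P a b ∧ a ∉ U ∧ b ∉ U)
      (fun a b => negDG P a b ∧ a ∉ U ∧ b ∉ U)
      (g (i + n)).1 (g i).1 ((x (g (i + n)).1).xor (x (g i).1)) n := by
    intro n
    induction n with
    | zero =>
      intro i
      simpa using SWalk.nil (pos := fun a b => posDG P a b ∧ a ∉ U ∧ b ∉ U)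
        (neg := fun a b => negDG P a b ∧ a ∉ U ∧ b ∉ U) (g i).1
    | succ n ih =>
      intro i
      have hstep := hnxt2 (g (i + n)).1 (g (i + n)).2
      have hsucc : (g (i + n + 1)).1 = nxt (g (i + n)).1 (g (i + n)).2 := by
        rw [hgsucc]
      rcases hstep with ⟨hpos, heq⟩ | ⟨hneg, hne⟩
      · have harc : posDG P (g (i + n + 1)).1 (g (i + n)).1 ∧
            (g (i + n + 1)).1 ∉ U ∧ (g (i + n)).1 ∉ U := by
          refine ⟨?_, ?_, hnotU _⟩
          · rw [hsucc]; exact hpos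
          · rw [hsucc]; exact hnotU ⟨_, hnxt1 _ _⟩
        have := SWalk.consPos (pos := fun a b => posDG P a b ∧ a ∉ U ∧ b ∉ U)
          (neg := fun a b => negDG P a b ∧ a ∉ U ∧ b ∉ U) harc (ih i)
        have hxeq : x (g (i + n + 1)).1 = x (g (i + n)).1 := by rw [hsucc]; exact heq
        rwa [show i + (n + 1) = i + n + 1 from rfl, hxeq]
      · have harc : negDG P (g (i + n + 1)).1 (g (i + n)).1 ∧
            (g (i + n + 1)).1 ∉ U ∧ (g (i + n)).1 ∉ U := by
          refine ⟨?_, ?_, hnotU _⟩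
          · rw [hsucc]; exact hneg
          · rw [hsucc]; exact hnotU ⟨_, hnxt1 _ _⟩
        have hw := SWalk.consNeg (pos := fun a b => posDG P a b ∧ a ∉ U ∧ b ∉ U)
          (neg := fun a b => negDG P a b ∧ a ∉ U ∧ b ∉ U) harc (ih i)
        have hxne : x (g (i + n + 1)).1 = !(x (g (i + n)).1) := by
          rw [hsucc]
          cases h1 : x (nxt (g (i + n)).1 (g (i + n)).2) <;>
            cases h2 : x (g (i + n)).1 <;> simp_all
        rw [show i + (n + 1) = i + n + 1 from rfl,
          bool_xor_aux (c := x (g i).1) hxne]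
        exact hw
  -- pigeonhole
  obtain ⟨i, j, hij, hgij⟩ : ∃ i j, i ≠ j ∧ g i = g j :=
    Finite.exists_ne_map_eq_of_infinite g
  wlog hlt : i < j generalizing i j
  · exact this j i hij.symm hgij.symm (by omega)
  have hn : j - i ≠ 0 := by omega
  have hw := walk (j - i) i
  rw [show i + (j - i) = j from by omega, ← hgij] at hw
  simp only [Bool.xor_self] at hw
  exact hpfvs (g i).1 (j - i) hn hw

end Main

/-- if `U` is a positive feedback vertex set of the dependence graph of `P`
(i.e. every positive cycle meets `U`, equivalently the graph restricted to the vertices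
outside `U` has no positive cycle), then `P` has at most `2 ^ |U|` stable models. -/
theorem stmt9 {V : Type*} [DecidableEq V] [Fintype V] (P : Finset (Rule V)) (U : Finset V)
    (hpfvs : ∀ (u : V) (n : ℕ), n ≠ 0 →
      ¬ SWalk (fun a b => posDG P a b ∧ a ∉ U ∧ b ∉ U)
              (fun a b => negDG P a b ∧ a ∉ U ∧ b ∉ U) u u false n) :
    {x : V → Bool | isStable P x}.ncard ≤ 2 ^ U.card := by
  classical
  set S := {x : V → Bool | isStable P x} with hS
  let f : (V → Bool) → (↥U → Bool) := fun x u => x u.1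
  have hinj : Set.InjOn f S := by
    intro a ha b hb hab
    exact fixed_agree P U hpfvs (stable_fixed P a ha) (stable_fixed P b hb)
      (fun u hu => congrFun hab ⟨u, hu⟩)
  calc S.ncard = (f '' S).ncard := (Set.ncard_image_of_injOn hinj).symm
    _ ≤ (Set.univ : Set (↥U → Bool)).ncard :=
        Set.ncard_le_ncard (Set.subset_univ _) Set.finite_univ
    _ = 2 ^ U.card := by
        simp [Set.ncard_univ, Nat.card_eq_fintype_card, Fintype.card_fun, Fintype.card_coe]
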